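/- Let Δ(t, x₀, x₁) = e^{2t}((x₀ + t + 1)^{−2} − (x₁ + t + 1)^{−2}), defined on the open set Ω = {(t,x₀,x₁) ∈ ℝ³ : x₀ ≠ −t−1 and x₁ ≠ −t−1}, and let g(t,x) = (1+t)³ + t + (3(1+t)² + 1)x + 3(1+t)x² + x³. Then on Ω both identities hold: ∂Δ/∂t + (t + x₀)∂Δ/∂x₀ + (t + x₁)∂Δ/∂x₁ = 0 and ∂Δ/∂t + g(t,x₀)∂Δ/∂x₀ + g(t,x₁)∂Δ/∂x₁ = 0. That is, Δ is a common first integral of the time-prolongations to ℝ × ℝ² of the time-dependent vector fields X₁(t,x) = (t+x)∂/∂x and X₂(t,x) = g(t,x)∂/∂x. -/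

import Mathlib

set_option maxHeartbeats 1000000

/-- `Δ(t, x₀, x₁) = e^{2t}((x₀ + t + 1)^{−2} − (x₁ + t + 1)^{−2})`. -/
noncomputable def abelDelta : ℝ × ℝ × ℝ → ℝ := fun p =>
  Real.exp (2 * p.1) * (((p.2.1 + p.1 + 1) ^ 2)⁻¹ - ((p.2.2 + p.1 + 1) ^ 2)⁻¹)

/-- `g(t,x) = (1+t)³ + t + (3(1+t)² + 1)x + 3(1+t)x² + x³`. -/
def abelG (t x : ℝ) : ℝ :=
  (1 + t) ^ 3 + t + (3 * (1 + t) ^ 2 + 1) * x + 3 * (1 + t) * x ^ 2 + x ^ 3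

/-- On `Ω = {(t,x₀,x₁) : x₀ ≠ −t−1, x₁ ≠ −t−1}`, the function
`Δ(t,x₀,x₁) = e^{2t}((x₀+t+1)^{−2} − (x₁+t+1)^{−2})` satisfies
`∂Δ/∂t + (t + x₀)∂Δ/∂x₀ + (t + x₁)∂Δ/∂x₁ = 0` and
`∂Δ/∂t + g(t,x₀)∂Δ/∂x₀ + g(t,x₁)∂Δ/∂x₁ = 0`, i.e. `Δ` is a common first integral of the
time-prolongations to `ℝ × ℝ²` of `X₁(t,x) = (t+x)∂/∂x` and `X₂(t,x) = g(t,x)∂/∂x`. -/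
theorem abelDelta_first_integral :
    ∀ p : ℝ × ℝ × ℝ, p.2.1 ≠ -p.1 - 1 → p.2.2 ≠ -p.1 - 1 →
      fderiv ℝ abelDelta p (1, 0, 0)
          + (p.1 + p.2.1) * fderiv ℝ abelDelta p (0, 1, 0)
          + (p.1 + p.2.2) * fderiv ℝ abelDelta p (0, 0, 1) = 0
        ∧
      fderiv ℝ abelDelta p (1, 0, 0)
          + abelG p.1 p.2.1 * fderiv ℝ abelDelta p (0, 1, 0)
          + abelG p.1 p.2.2 * fderiv ℝ abelDelta p (0, 0, 1) = 0 := by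
  intro p h0 h1
  obtain ⟨t, x, y⟩ := p
  simp only at h0 h1 ⊢
  have hu : x + t + 1 ≠ 0 := by intro h; apply h0; linarith
  have hv : y + t + 1 ≠ 0 := by intro h; apply h1; linarith
  set u : ℝ := x + t + 1 with hu'
  set v : ℝ := y + t + 1 with hv'
  set E : ℝ := Real.exp (2 * t) with hE'
  set Pt : (ℝ × ℝ × ℝ) →L[ℝ] ℝ := ContinuousLinearMap.fst ℝ ℝ (ℝ × ℝ) with hPt
  set P0 : (ℝ × ℝ × ℝ) →L[ℝ] ℝ :=
    (ContinuousLinearMap.fst ℝ ℝ ℝ).comp (ContinuousLinearMap.snd ℝ ℝ (ℝ × ℝ)) with hP0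
  set P1 : (ℝ × ℝ × ℝ) →L[ℝ] ℝ :=
    (ContinuousLinearMap.snd ℝ ℝ ℝ).comp (ContinuousLinearMap.snd ℝ ℝ (ℝ × ℝ)) with hP1
  set a : ℝ := 2 * E * ((u ^ 2)⁻¹ - (v ^ 2)⁻¹) - 2 * E * (u ^ 3)⁻¹ + 2 * E * (v ^ 3)⁻¹
    with ha'
  set b : ℝ := -(2 * E * (u ^ 3)⁻¹) with hb'
  set c : ℝ := 2 * E * (v ^ 3)⁻¹ with hc'
  have hA : HasFDerivAt (fun q : ℝ × ℝ × ℝ => q.2.1 + q.1 + 1) (P0 + Pt) (t, x, y) := by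
    have := ((P0 + Pt).hasFDerivAt (x := (t, x, y))).add_const 1
    simpa [hP0, hP1, hPt] using this
  have hB : HasFDerivAt (fun q : ℝ × ℝ × ℝ => q.2.2 + q.1 + 1) (P1 + Pt) (t, x, y) := by
    have := ((P1 + Pt).hasFDerivAt (x := (t, x, y))).add_const 1
    simpa [hP0, hP1, hPt] using this
  have hsq0 : HasFDerivAt (fun q : ℝ × ℝ × ℝ => (q.2.1 + q.1 + 1) * (q.2.1 + q.1 + 1))
      (u • (P0 + Pt) + u • (P0 + Pt)) (t, x, y) := hA.mul hA
  have hu2 := (hasFDerivAt_inv (mul_ne_zero hu hu)).comp (t, x, y) hsq0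
  have hsq1 : HasFDerivAt (fun q : ℝ × ℝ × ℝ => (q.2.2 + q.1 + 1) * (q.2.2 + q.1 + 1))
      (v • (P1 + Pt) + v • (P1 + Pt)) (t, x, y) := hB.mul hB
  have hv2 := (hasFDerivAt_inv (mul_ne_zero hv hv)).comp (t, x, y) hsq1
  have hexp : HasFDerivAt (fun q : ℝ × ℝ × ℝ => Real.exp (2 * q.1))
      (E • ((2 : ℝ) • Pt)) (t, x, y) := by
    have h2t : HasFDerivAt (fun q : ℝ × ℝ × ℝ => 2 * q.1) ((2 : ℝ) • Pt) (t, x, y) := by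
      have := ((Pt).hasFDerivAt (x := (t, x, y))).const_mul (2 : ℝ)
      simpa [hPt] using this
    exact h2t.exp
  have hD0' := hexp.mul (hu2.sub hv2)
  have hD0 : HasFDerivAt abelDelta
      (E • (((1 : ℝ →L[ℝ] ℝ).smulRight (-((u * u) ^ 2)⁻¹)).comp (u • (P0 + Pt) + u • (P0 + Pt))
          - ((1 : ℝ →L[ℝ] ℝ).smulRight (-((v * v) ^ 2)⁻¹)).comp (v • (P1 + Pt) + v • (P1 + Pt)))
        + (((u * u))⁻¹ - ((v * v))⁻¹) • (E • ((2 : ℝ) • Pt))) (t, x, y) := by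
    have : abelDelta = fun q : ℝ × ℝ × ℝ =>
        Real.exp (2 * q.1) * (((q.2.1 + q.1 + 1) * (q.2.1 + q.1 + 1))⁻¹
          - ((q.2.2 + q.1 + 1) * (q.2.2 + q.1 + 1))⁻¹) := by
      funext q; simp [abelDelta, sq]
    rw [this]
    exact hD0'
  have htx : t + x = u - 1 := by rw [hu']; ring
  have hty : t + y = v - 1 := by rw [hv']; ring
  have hgx : abelG t x = u ^ 3 + u - 1 := by rw [hu']; simp only [abelG]; ring
  have hgy : abelG t y = v ^ 3 + v - 1 := by rw [hv']; simp only [abelG]; ring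
  clear_value u v E a b c
  have hD : HasFDerivAt abelDelta (a • Pt + b • P0 + c • P1) (t, x, y) := by
    refine hD0.congr_fderiv (ContinuousLinearMap.ext fun q => ?_)
    obtain ⟨s, w, z⟩ := q
    simp only [ContinuousLinearMap.add_apply, ContinuousLinearMap.smul_apply,
      ContinuousLinearMap.sub_apply, ContinuousLinearMap.coe_comp', Function.comp_apply,
      ContinuousLinearMap.coe_fst', ContinuousLinearMap.coe_snd', hPt, hP0, hP1,
      smul_eq_mul, ha', hb', hc', ContinuousLinearMap.smulRight_apply,
      ContinuousLinearMap.one_apply]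
    field_simp
    ring
  rw [hD.fderiv]
  rw [htx, hty, hgx, hgy]
  simp only [ContinuousLinearMap.add_apply, ContinuousLinearMap.smul_apply,
    ContinuousLinearMap.coe_comp', Function.comp_apply,
    ContinuousLinearMap.coe_fst', ContinuousLinearMap.coe_snd', hPt, hP0, hP1,
    smul_eq_mul, ha', hb', hc']
  constructor
  · field_simp
    ring
  · field_simp
    ring
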